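/- Let A and B be linear subspaces of ℝ^n and set B̃ = B + (A^⊥ ∩ B^⊥). Then for every a ∈ A, the reflection of a across B̃ lies in A + B: R_B̃ a ∈ A + B. -/

import Mathlib

/-- The reflection across a subspace `K` of Euclidean space, `R_K = 2 P_K - Id`. -/
noncomputable def reflS {n : ℕ} (K : Submodule ℝ (EuclideanSpace ℝ (Fin n)))
    (x : EuclideanSpace ℝ (Fin n)) : EuclideanSpace ℝ (Fin n) :=
  (2:ℝ) • (Submodule.orthogonalProjectionOnto K x : EuclideanSpace ℝ (Fin n)) - x

/-- For linear subspaces `A, B` of ℝⁿ and the enlargement `B̃ = B + (A^⊥ ∩ B^⊥)`: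
the reflection across `B̃` of any point of `A` lies in `A + B`. -/
theorem stmt15 {n : ℕ} (A B : Submodule ℝ (EuclideanSpace ℝ (Fin n))) :
    ∀ a ∈ A, reflS (B ⊔ (Aᗮ ⊓ Bᗮ)) a ∈ (A ⊔ B : Submodule ℝ (EuclideanSpace ℝ (Fin n))) := by
  intro a ha
  set pb : EuclideanSpace ℝ (Fin n) := (Submodule.orthogonalProjectionOnto B a : EuclideanSpace ℝ (Fin n))
    with hpb
  have hpbB : pb ∈ B := (Submodule.orthogonalProjectionOnto B a).2
  have key : (Submodule.orthogonalProjectionOnto (B ⊔ (Aᗮ ⊓ Bᗮ)) a : EuclideanSpace ℝ (Fin n)) = pb := by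
    apply Submodule.eq_starProjection_of_mem_of_inner_eq_zero
    · exact Submodule.mem_sup_left hpbB
    · intro w hw
      rw [Submodule.mem_sup] at hw
      obtain ⟨y, hy, z, hz, rfl⟩ := hw
      rw [inner_add_right]
      have h1 : inner ℝ (a - pb) y = (0:ℝ) := Submodule.starProjection_inner_eq_zero a y hy
      have h2 : inner ℝ (a - pb) z = (0:ℝ) := by
        rw [inner_sub_left]
        have hza : inner ℝ a z = (0:ℝ) := by
          exact hz.1 a ha
        have hzb : inner ℝ pb z = (0:ℝ) := by
          exact hz.2 pb hpbB
        rw [hza, hzb, sub_zero]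
      rw [h1, h2, add_zero]
  rw [reflS, key]
  have : (2:ℝ) • pb - a = pb + (pb - a) := by ring_nf; module
  rw [this]
  exact Submodule.add_mem _ (Submodule.mem_sup_right hpbB)
    (Submodule.sub_mem _ (Submodule.mem_sup_right hpbB) (Submodule.mem_sup_left ha))
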